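/- McDiarmid's counterexample: let M be the graphic matroid on the multigraph obtained from K_4 on vertices {1,2,3,4} by duplicating the three edges incident to vertex 4, with edge set {12, 13, 14, 23, 24, 34, 14', 24', 34'}. With I_1 = {14, 14', 23}, I_2 = {24, 24', 13}, I_3 = {34, 34', 12}, M has rank 3, is a disjoint union of 3 bases, the I_i are pairwise disjoint sets of size 3, but there is no 3×3 grid containing each element exactly once with row i equal to I_i and every column a basis of M. (Note: here the I_i are not independent, since each contains a pair of parallel edges.) -/

import Mathlib

open Set Function Matroid SimpleGraph

/-- The endpoint map of McDiarmid's multigraph: `K₄` on `{0,1,2,3}` (vertex `3`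
playing the role of vertex `4`) with the three edges at vertex `3` duplicated.
Edges `0..8` are `12, 13, 14, 23, 24, 34, 14', 24', 34'`. -/
def mcdEnds : Fin 9 → Sym2 (Fin 4) :=
  ![s(0, 1), s(0, 2), s(0, 3), s(1, 2), s(1, 3), s(2, 3), s(0, 3), s(1, 3), s(2, 3)]

/-- A set of multigraph edges is acyclic: no two parallel edges, and the
underlying simple graph is acyclic. -/
def McdAcyclic (S : Set (Fin 9)) : Prop :=
  Set.InjOn mcdEnds S ∧ (SimpleGraph.fromEdgeSet (mcdEnds '' S)).IsAcyclic

/-- A spanning tree of McDiarmid's multigraph (as a set of edges). -/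
def McdSpanningTree (T : Set (Fin 9)) : Prop :=
  McdAcyclic T ∧ (SimpleGraph.fromEdgeSet (mcdEnds '' T)).Connected

/-- The row sets `I₁ = {14, 14', 23}`, `I₂ = {24, 24', 13}`, `I₃ = {34, 34', 12}`. -/
def mcdRows : Fin 3 → Set (Fin 9) :=
  ![{2, 6, 3}, {4, 7, 1}, {5, 8, 0}]

/-! ### Auxiliary decidable machinery -/

/-- Codes of the six edges of `K₄`: `0 ↦ 01, 1 ↦ 02, 2 ↦ 03, 3 ↦ 12, 4 ↦ 13, 5 ↦ 23`. -/
def mcdE : Fin 9 → Fin 6 := ![0, 1, 2, 3, 4, 5, 2, 4, 5]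

/-- `tri x y z` holds iff `{x,y,z}` is (the code set of) a triangle of `K₄`. -/
def tri (x y z : Fin 6) : Bool :=
  ((x == 0 || y == 0 || z == 0) && (x == 1 || y == 1 || z == 1) && (x == 3 || y == 3 || z == 3)) ||
  ((x == 0 || y == 0 || z == 0) && (x == 2 || y == 2 || z == 2) && (x == 4 || y == 4 || z == 4)) ||
  ((x == 1 || y == 1 || z == 1) && (x == 2 || y == 2 || z == 2) && (x == 5 || y == 5 || z == 5)) ||
  ((x == 3 || y == 3 || z == 3) && (x == 4 || y == 4 || z == 4) && (x == 5 || y == 5 || z == 5))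

/-- Decidable independence predicate on finsets. -/
def myI (F : Finset (Fin 9)) : Prop :=
  F.card ≤ 3 ∧ (∀ a ∈ F, ∀ b ∈ F, mcdE a = mcdE b → a = b) ∧
    (∀ a ∈ F, ∀ b ∈ F, ∀ c ∈ F, tri (mcdE a) (mcdE b) (mcdE c) = false)

instance : DecidablePred myI := fun _ => inferInstanceAs (Decidable (_ ∧ _))

instance (s : Finset (Sym2 (Fin 4))) : DecidableRel (fromEdgeSet (↑s : Set (Sym2 (Fin 4)))).Adj :=
  fun _ _ => decidable_of_iff _ (SimpleGraph.fromEdgeSet_adj _).symm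

instance (G H : SimpleGraph (Fin 4)) [DecidableRel G.Adj] [DecidableRel H.Adj] :
    DecidableRel (G \ H).Adj := fun _ _ => inferInstanceAs (Decidable (_ ∧ _))

def mcdAcyFin (F : Finset (Fin 9)) : Prop :=
  (∀ a ∈ F, ∀ b ∈ F, mcdEnds a = mcdEnds b → a = b) ∧
  ∀ v w : Fin 4, (fromEdgeSet (↑(F.image mcdEnds) : Set (Sym2 (Fin 4)))).Adj v w →
    ¬ ((fromEdgeSet (↑(F.image mcdEnds) : Set (Sym2 (Fin 4)))) \
        fromEdgeSet (↑({s(v,w)} : Finset (Sym2 (Fin 4))) : Set (Sym2 (Fin 4)))).Reachable v w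

instance : DecidablePred mcdAcyFin := fun _ => inferInstanceAs (Decidable (_ ∧ _))

lemma mcdAcyclic_coe (F : Finset (Fin 9)) : McdAcyclic ↑F ↔ mcdAcyFin F := by
  unfold McdAcyclic mcdAcyFin
  rw [← Finset.coe_image, isAcyclic_iff_forall_adj_isBridge]
  simp only [Finset.coe_singleton]
  constructor
  · rintro ⟨h1, h2⟩
    exact ⟨fun a ha b hb => h1 ha hb, fun v w hadj => (isBridge_iff).1 (h2 hadj)⟩
  · rintro ⟨h1, h2⟩
    exact ⟨fun a ha b hb => h1 a ha b hb, fun v w hadj => (isBridge_iff).2 (h2 v w hadj)⟩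

set_option maxRecDepth 100000 in
set_option maxHeartbeats 4000000 in
/-- The graph-theoretic acyclicity predicate agrees with the decidable one. -/
lemma mcd_key : ∀ F : Finset (Fin 9), mcdAcyFin F ↔ myI F := by decide

lemma mcdAcyclic_iff_myI (F : Finset (Fin 9)) : McdAcyclic ↑F ↔ myI F :=
  (mcdAcyclic_coe F).trans (mcd_key F)

/-! ### Small decidable facts -/

lemma myI_D0 : ∀ e : Fin 9, myI {e} := by decide

lemma myI_L2 : ∀ e a : Fin 9, mcdE e ≠ mcdE a → myI {e, a} := by decide

set_option maxRecDepth 4000 in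
lemma myI_L3 : ∀ e a b : Fin 9, mcdE e ≠ mcdE a → mcdE e ≠ mcdE b → mcdE a ≠ mcdE b →
    tri (mcdE e) (mcdE a) (mcdE b) = false → myI {e, a, b} := by decide

set_option synthInstance.maxSize 2000 in
set_option synthInstance.maxHeartbeats 1000000 in
set_option maxRecDepth 4000 in
set_option maxHeartbeats 4000000 in
lemma tri_D2 : ∀ a b x y z : Fin 6, a ≠ b → x ≠ y → x ≠ z → y ≠ z → tri x y z = false →
    (x ≠ a ∧ x ≠ b ∧ tri x a b = false) ∨ (y ≠ a ∧ y ≠ b ∧ tri y a b = false) ∨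
    (z ≠ a ∧ z ≠ b ∧ tri z a b = false) := by decide

/-! ### Matroid axioms for `myI` -/

lemma myI_subset {I J : Finset (Fin 9)} (hJ : myI J) (hIJ : I ⊆ J) : myI I :=
  ⟨(Finset.card_le_card hIJ).trans hJ.1,
   fun a ha b hb => hJ.2.1 a (hIJ ha) b (hIJ hb),
   fun a ha b hb c hc => hJ.2.2 a (hIJ ha) b (hIJ hb) c (hIJ hc)⟩

lemma myI_injOn {J : Finset (Fin 9)} (hJ : myI J) {x y : Fin 9} (hx : x ∈ J) (hy : y ∈ J)
    (hne : x ≠ y) : mcdE x ≠ mcdE y := fun h => hne (hJ.2.1 x hx y hy h)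

lemma myI_aug : ∀ I J : Finset (Fin 9), myI I → myI J → I.card < J.card →
    ∃ e ∈ J, e ∉ I ∧ myI (insert e I) := by
  intro I J hI hJ hlt
  have hJ3 := hJ.1
  have hI3 : I.card ≤ 2 := by omega
  interval_cases hc : I.card
  · -- `I = ∅`
    obtain rfl : I = ∅ := Finset.card_eq_zero.mp hc
    obtain ⟨e, he⟩ := Finset.card_pos.mp hlt
    exact ⟨e, he, by simp, by simpa using myI_D0 e⟩
  · -- `I = {a}`
    obtain ⟨a, rfl⟩ := Finset.card_eq_one.mp hc
    obtain ⟨x, hx, y, hy, hxy⟩ := Finset.one_lt_card.mp hlt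
    have hxyE : mcdE x ≠ mcdE y := myI_injOn hJ hx hy hxy
    by_cases hxa : mcdE x = mcdE a
    · have hya : mcdE y ≠ mcdE a := fun h => hxyE (hxa.trans h.symm)
      refine ⟨y, hy, ?_, ?_⟩
      · simp only [Finset.mem_singleton]; rintro rfl; exact hya rfl
      · simpa using myI_L2 y a hya
    · refine ⟨x, hx, ?_, ?_⟩
      · simp only [Finset.mem_singleton]; rintro rfl; exact hxa rfl
      · simpa using myI_L2 x a hxa
  · -- `I = {a, b}`
    obtain ⟨a, b, hab, rfl⟩ := Finset.card_eq_two.mp hc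
    have hJc : J.card = 3 := le_antisymm hJ3 hlt
    obtain ⟨x, y, z, hxy, hxz, hyz, rfl⟩ := Finset.card_eq_three.mp hJc
    have ha : a ∈ ({a, b} : Finset (Fin 9)) := by simp
    have hb : b ∈ ({a, b} : Finset (Fin 9)) := by simp
    have hx : x ∈ ({x, y, z} : Finset (Fin 9)) := by simp
    have hy : y ∈ ({x, y, z} : Finset (Fin 9)) := by simp
    have hz : z ∈ ({x, y, z} : Finset (Fin 9)) := by simp
    have habE : mcdE a ≠ mcdE b := myI_injOn hI ha hb hab
    have htri : tri (mcdE x) (mcdE y) (mcdE z) = false := hJ.2.2 x hx y hy z hz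
    rcases tri_D2 (mcdE a) (mcdE b) (mcdE x) (mcdE y) (mcdE z) habE
        (myI_injOn hJ hx hy hxy) (myI_injOn hJ hx hz hxz) (myI_injOn hJ hy hz hyz) htri with
      ⟨h1, h2, h3⟩ | ⟨h1, h2, h3⟩ | ⟨h1, h2, h3⟩
    · refine ⟨x, hx, ?_, myI_L3 x a b h1 h2 habE h3⟩
      simp only [Finset.mem_insert, Finset.mem_singleton]
      rintro (rfl | rfl); exacts [h1 rfl, h2 rfl]
    · refine ⟨y, hy, ?_, myI_L3 y a b h1 h2 habE h3⟩
      simp only [Finset.mem_insert, Finset.mem_singleton]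
      rintro (rfl | rfl); exacts [h1 rfl, h2 rfl]
    · refine ⟨z, hz, ?_, myI_L3 z a b h1 h2 habE h3⟩
      simp only [Finset.mem_insert, Finset.mem_singleton]
      rintro (rfl | rfl); exacts [h1 rfl, h2 rfl]

/-! ### The matroid -/

lemma mcdAcyclic_iff (S : Set (Fin 9)) :
    McdAcyclic S ↔ myI (Set.toFinite S).toFinset := by
  rw [← mcdAcyclic_iff_myI, Set.Finite.coe_toFinset]

def mcdMatroid : Matroid (Fin 9) :=
  (IndepMatroid.ofFinite (Set.finite_univ) McdAcyclic
    (by rw [show (∅ : Set (Fin 9)) = ↑(∅ : Finset (Fin 9)) by simp, mcdAcyclic_iff_myI]; decide)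
    (by
      intro I J hJ hIJ
      rw [mcdAcyclic_iff] at hJ ⊢
      exact myI_subset hJ (by simpa using hIJ))
    (by
      intro I J hI hJ hlt
      rw [mcdAcyclic_iff] at hI hJ
      rw [Set.ncard_eq_toFinset_card I (Set.toFinite I),
        Set.ncard_eq_toFinset_card J (Set.toFinite J)] at hlt
      obtain ⟨e, heJ, heI, hins⟩ := myI_aug _ _ hI hJ hlt
      refine ⟨e, by simpa using heJ, by simpa using heI, ?_⟩
      rw [mcdAcyclic_iff]
      refine myI_subset hins ?_
      intro t ht
      simp only [Set.Finite.mem_toFinset, Set.mem_insert_iff] at ht ⊢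
      rcases ht with rfl | ht
      · exact Finset.mem_insert_self _ _
      · exact Finset.mem_insert_of_mem (by simpa using ht))
    (fun I _ => Set.subset_univ I)).matroid

lemma mcdMatroid_E : mcdMatroid.E = Set.univ := rfl

lemma mcdMatroid_indep (S : Set (Fin 9)) : mcdMatroid.Indep S ↔ McdAcyclic S := by
  rw [mcdMatroid, IndepMatroid.matroid_indep_iff, IndepMatroid.ofFinite_indep]

lemma indep_coe (F : Finset (Fin 9)) : mcdMatroid.Indep ↑F ↔ myI F := by
  rw [mcdMatroid_indep, mcdAcyclic_iff_myI]

lemma base_of_card3 (F : Finset (Fin 9)) (hF : myI F) (h3 : F.card = 3) :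
    mcdMatroid.IsBase ↑F := by
  refine ((indep_coe F).mpr hF).isBase_of_forall_insert ?_
  rintro e ⟨-, heF⟩ hind
  rw [← Finset.coe_insert, indep_coe] at hind
  have := hind.1
  rw [Finset.card_insert_of_notMem (by simpa using heF), h3] at this
  omega

/-! ### Pieces for the grid nonexistence -/

def mcdBf : Fin 3 → Finset (Fin 9) := ![{0, 5, 6}, {1, 3, 7}, {2, 4, 8}]

def rowF9 : Fin 3 → Fin 3 → Fin 9 := ![![2, 6, 3], ![4, 7, 1], ![5, 8, 0]]

set_option maxRecDepth 4000 in
set_option maxHeartbeats 1000000 in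
lemma mcd_grid : ∀ h0 h1 h2 : Fin 3 → Fin 3, Function.Injective h0 → Function.Injective h1 →
    Function.Injective h2 →
    ∃ j, mcdE (rowF9 0 (h0 j)) = mcdE (rowF9 1 (h1 j)) ∨
      mcdE (rowF9 0 (h0 j)) = mcdE (rowF9 2 (h2 j)) ∨
      mcdE (rowF9 1 (h1 j)) = mcdE (rowF9 2 (h2 j)) ∨
      tri (mcdE (rowF9 0 (h0 j))) (mcdE (rowF9 1 (h1 j))) (mcdE (rowF9 2 (h2 j))) = true := by
  decide

/-- McDiarmid's counterexample: the graphic matroid of the multigraph has rank 3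
and is a disjoint union of 3 bases, the `I_i` are pairwise disjoint 3-sets, but
no `3 × 3` grid has row `i` equal to `I_i` and all columns bases. -/
theorem mcdiarmid_counterexample :
    ∃ M : Matroid (Fin 9),
      M.E = univ ∧
      (∀ S, M.Indep S ↔ McdAcyclic S) ∧
      (∀ B, M.IsBase B → B.ncard = 3) ∧
      (∃ B : Fin 3 → Set (Fin 9), (∀ j, M.IsBase (B j)) ∧
        Pairwise (Function.onFun Disjoint B) ∧ (⋃ j, B j) = univ) ∧
      Pairwise (Function.onFun Disjoint mcdRows) ∧
      (∀ i, (mcdRows i).ncard = 3) ∧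
      ¬ ∃ g : Fin 3 → Fin 3 → Fin 9,
          Function.Injective (fun p : Fin 3 × Fin 3 => g p.1 p.2) ∧
          (∀ i, {x | ∃ j, g i j = x} = mcdRows i) ∧
          (∀ j, M.IsBase {x | ∃ i, g i j = x}) := by
  refine ⟨mcdMatroid, rfl, mcdMatroid_indep, ?_, ?_, ?_, ?_, ?_⟩
  · -- all bases have 3 elements
    intro B hB
    have hB0 : mcdMatroid.IsBase ↑({0, 1, 2} : Finset (Fin 9)) :=
      base_of_card3 _ (by decide) (by decide)
    rw [hB.ncard_eq_ncard_of_isBase hB0, Set.ncard_coe_finset]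
    decide
  · -- partition into three bases
    refine ⟨fun j => ↑(mcdBf j), fun j => ?_, ?_, ?_⟩
    · fin_cases j <;> exact base_of_card3 _ (by decide) (by decide)
    · have hd : ∀ i j : Fin 3, i ≠ j → Disjoint (mcdBf i) (mcdBf j) := by decide
      intro i j hij
      exact Finset.disjoint_coe.mpr (hd i j hij)
    · apply Set.eq_univ_of_forall
      intro x
      simp only [Set.mem_iUnion, Finset.mem_coe]
      revert x; decide
  · -- rows pairwise disjoint
    intro i j hij
    rw [Function.onFun, Set.disjoint_left]
    intro x hx hx'
    fin_cases i <;> fin_cases j <;> simp_all [mcdRows] <;> omega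
  · -- rows have 3 elements
    have e0 : mcdRows 0 = ↑({2, 6, 3} : Finset (Fin 9)) := by ext x; simp [mcdRows]
    have e1 : mcdRows 1 = ↑({4, 7, 1} : Finset (Fin 9)) := by ext x; simp [mcdRows]
    have e2 : mcdRows 2 = ↑({5, 8, 0} : Finset (Fin 9)) := by ext x; simp [mcdRows]
    intro i
    fin_cases i
    · rw [show mcdRows ⟨0, by omega⟩ = mcdRows 0 from rfl, e0, Set.ncard_coe_finset]; decide
    · rw [show mcdRows ⟨1, by omega⟩ = mcdRows 1 from rfl, e1, Set.ncard_coe_finset]; decide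
    · rw [show mcdRows ⟨2, by omega⟩ = mcdRows 2 from rfl, e2, Set.ncard_coe_finset]; decide
  · -- no grid
    rintro ⟨g, hinj, hrow, hbase⟩
    have hmem : ∀ i j, g i j ∈ mcdRows i := fun i j => (hrow i) ▸ ⟨j, rfl⟩
    set h : Fin 3 → Fin 3 → Fin 3 := fun i j =>
      if g i j = rowF9 i 0 then 0 else if g i j = rowF9 i 1 then 1 else 2 with hdef
    have d01 : ∀ r : Fin 3, rowF9 r 0 ≠ rowF9 r 1 := by decide
    have d02 : ∀ r : Fin 3, rowF9 r 0 ≠ rowF9 r 2 := by decide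
    have d12 : ∀ r : Fin 3, rowF9 r 1 ≠ rowF9 r 2 := by decide
    have hg : ∀ i j, rowF9 i (h i j) = g i j := by
      intro i j
      have hm := hmem i j
      have step : g i j = rowF9 i 0 ∨ g i j = rowF9 i 1 ∨ g i j = rowF9 i 2 →
          rowF9 i (h i j) = g i j := by
        rintro (h1 | h1 | h1)
        · simp [hdef, h1]
        · simp [hdef, h1, (d01 i).symm]
        · simp [hdef, h1, (d02 i).symm, (d12 i).symm]
      apply step
      fin_cases i <;> simp [mcdRows, rowF9] at hm ⊢ <;> tauto
    have hinj' : ∀ i, Function.Injective (h i) := by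
      intro i j j' he
      have : g i j = g i j' := by rw [← hg i j, ← hg i j', he]
      have := hinj (a₁ := (i, j)) (a₂ := (i, j')) this
      exact (Prod.mk.injEq _ _ _ _ ▸ this).2
    obtain ⟨j, hcon⟩ := mcd_grid (h 0) (h 1) (h 2) (hinj' 0) (hinj' 1) (hinj' 2)
    simp only [hg] at hcon
    -- the `j`-th column is a base, hence `myI`
    have hcol : {x | ∃ i, g i j = x} = ↑({g 0 j, g 1 j, g 2 j} : Finset (Fin 9)) := by
      ext x
      simp only [Set.mem_setOf_eq, Finset.coe_insert, Finset.coe_singleton,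
        Set.mem_insert_iff, Set.mem_singleton_iff]
      constructor
      · rintro ⟨i, rfl⟩; fin_cases i <;> simp
      · rintro (rfl | rfl | rfl); exacts [⟨0, rfl⟩, ⟨1, rfl⟩, ⟨2, rfl⟩]
    have hI : myI {g 0 j, g 1 j, g 2 j} := by
      rw [← indep_coe, ← hcol]; exact (hbase j).indep
    have hne : ∀ i i' : Fin 3, i ≠ i' → g i j ≠ g i' j := by
      intro i i' hii he
      exact hii (Prod.mk.injEq _ _ _ _ ▸ hinj (a₁ := (i, j)) (a₂ := (i', j)) he).1
    have h0 : g 0 j ∈ ({g 0 j, g 1 j, g 2 j} : Finset (Fin 9)) := by simp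
    have h1 : g 1 j ∈ ({g 0 j, g 1 j, g 2 j} : Finset (Fin 9)) := by simp
    have h2 : g 2 j ∈ ({g 0 j, g 1 j, g 2 j} : Finset (Fin 9)) := by simp
    rcases hcon with hc | hc | hc | hc
    · exact hne 0 1 (by decide) (hI.2.1 _ h0 _ h1 hc)
    · exact hne 0 2 (by decide) (hI.2.1 _ h0 _ h2 hc)
    · exact hne 1 2 (by decide) (hI.2.1 _ h1 _ h2 hc)
    · rw [hI.2.2 _ h0 _ h1 _ h2] at hc; exact Bool.false_ne_true hc
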